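/- Let b>0, σ>0 satisfy σ² ≤ 2b, let T>0, x₀>0, C>0, and let n be a positive integer with n > 2T. On a probability space let q₁,…,qₙ be i.i.d. random variables with P(q_k = √(T/n)) = P(q_k = −√(T/n)) = 1/2, let F_k = σ(q₁,…,q_k) (F₀ trivial), and define the truncated scheme X₀⁽ⁿ'ᶜ⁾ = x₀, X_k⁽ⁿ'ᶜ⁾ = X_{k−1}⁽ⁿ'ᶜ⁾ + (b − min(X_{k−1}⁽ⁿ'ᶜ⁾,C))T/n + σ q_k √(min(X_{k−1}⁽ⁿ'ᶜ⁾,C)), with increments Q_k⁽ⁿ'ᶜ⁾ = X_k⁽ⁿ'ᶜ⁾ − X_{k−1}⁽ⁿ'ᶜ⁾. Then almost surely Σ_{k=1}^{n} E[(Q_k⁽ⁿ'ᶜ⁾)² | F_{k−1}] ≤ ((b+C)T + σ√(TC))² and Σ_{k=1}^{n} |E[Q_k⁽ⁿ'ᶜ⁾ | F_{k−1}]| ≤ (b+C)T, bounds that are uniform in n. -/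

import Mathlib

open MeasureTheory ProbabilityTheory

private theorem cir_aux_nonneg (b σ t a s qv x : ℝ) (hσ : 0 ≤ σ) (hσ2 : σ^2 ≤ 2*b)
    (hb : 0 ≤ b) (ht0 : 0 < t) (ht2 : t < 1/2) (ha2 : a^2 = t) (ha0 : 0 ≤ a)
    (hs0 : 0 ≤ s) (hq : -a ≤ qv) (hxs : s^2 ≤ x) :
    0 ≤ x + (b - s^2) * t + σ * qv * s := by
  have hqs : -(σ*a*s) ≤ σ*qv*s := by
    nlinarith [mul_nonneg (mul_nonneg hσ hs0) (show 0 ≤ qv + a by linarith)]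
  have h1t : 0 < 1 - t := by linarith
  have hbt : 0 ≤ b*t := mul_nonneg hb ht0.le
  have h24 : 2*(b*t) ≤ 4*(1-t)*(b*t) := by
    nlinarith [mul_nonneg (show (0:ℝ) ≤ 2-4*t by linarith) hbt]
  have hσt : σ^2*t ≤ 2*b*t := mul_le_mul_of_nonneg_right hσ2 ht0.le
  have ha2t : σ^2*a^2 = σ^2*t := by rw [ha2]
  have hH := sq_nonneg (2*(1-t)*s - σ*a)
  have h4G : 0 ≤ 4*(1-t)*(s^2 + (b - s^2)*t - σ*a*s) := by linarith
  nlinarith [h4G, h1t, hqs, hxs]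

/-- Uniform boundedness of the sums of conditional first and second moments
of the increments `Q_k = X_k − X_{k−1}` of the truncated Euler scheme: almost surely
`Σ_{k=1}^n E[Q_k² | F_{k−1}] ≤ ((b+C)T + σ√(TC))²` and
`Σ_{k=1}^n |E[Q_k | F_{k−1}]| ≤ (b+C)T`. -/
theorem truncated_cir_condexp_sums_bounded {Ω : Type*} [MeasurableSpace Ω]
    (μ : Measure Ω) [IsProbabilityMeasure μ]
    (b σ T x₀ C : ℝ) (n : ℕ)
    (hb : 0 < b) (hσ : 0 < σ) (hσ2 : σ ^ 2 ≤ 2 * b)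
    (hT : 0 < T) (hx₀ : 0 < x₀) (hC : 0 < C) (hn : 0 < n) (hnT : 2 * T < (n : ℝ))
    (q : ℕ → Ω → ℝ) (hmeas : ∀ k, Measurable (q k))
    (hindep : iIndepFun (m := fun _ : Fin n => Real.measurableSpace) (fun i => q (i + 1)) μ)
    (hdist : ∀ k, 1 ≤ k → k ≤ n →
      μ {ω | q k ω = Real.sqrt (T / n)} = 1 / 2 ∧
        μ {ω | q k ω = -Real.sqrt (T / n)} = 1 / 2)
    (X : ℕ → Ω → ℝ) (hX0 : ∀ ω, X 0 ω = x₀)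
    (hXrec : ∀ k, 1 ≤ k → k ≤ n → ∀ ω,
      X k ω = X (k - 1) ω + (b - min (X (k - 1) ω) C) * T / n
        + σ * q k ω * Real.sqrt (min (X (k - 1) ω) C)) :
    (∀ᵐ ω ∂μ,
      ∑ k ∈ Finset.Icc 1 n,
          (μ[fun ω' => (X k ω' - X (k - 1) ω') ^ 2
            | ⨆ i ∈ Finset.Icc 1 (k - 1),
                MeasurableSpace.comap (q i) Real.measurableSpace]) ω
        ≤ ((b + C) * T + σ * Real.sqrt (T * C)) ^ 2) ∧
    (∀ᵐ ω ∂μ,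
      ∑ k ∈ Finset.Icc 1 n,
          |(μ[fun ω' => X k ω' - X (k - 1) ω'
            | ⨆ i ∈ Finset.Icc 1 (k - 1),
                MeasurableSpace.comap (q i) Real.measurableSpace]) ω|
        ≤ (b + C) * T) := by
  classical
  have hn0 : (0:ℝ) < n := by exact_mod_cast hn
  have hn1 : (1:ℝ) ≤ n := by exact_mod_cast hn
  set a := Real.sqrt (T / n) with ha_def
  have hTn : 0 < T / n := div_pos hT hn0
  have ha : 0 < a := Real.sqrt_pos.mpr hTn
  have ha2 : a ^ 2 = T / n := Real.sq_sqrt hTn.le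
  set F : ℕ → MeasurableSpace Ω := fun j => ⨆ i ∈ Finset.Icc 1 j,
    MeasurableSpace.comap (q i) Real.measurableSpace with hF_def
  have hF_le : ∀ j, F j ≤ ‹MeasurableSpace Ω› :=
    fun j => iSup₂_le fun i _ => (hmeas i).comap_le
  have hFmono : Monotone F := by
    intro i j hij
    exact biSup_mono fun x hx => Finset.mem_Icc.mpr
      ⟨(Finset.mem_Icc.mp hx).1, le_trans (Finset.mem_Icc.mp hx).2 hij⟩
  -- measurability of X j with respect to F j
  have hXsm : ∀ j, j ≤ n → Measurable[F j] (X j) := by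
    intro j
    induction j with
    | zero =>
      intro _
      have : X 0 = fun _ => x₀ := funext hX0
      rw [this]; exact measurable_const
    | succ j ih =>
      intro hj
      have hj' : j ≤ n := by omega
      have hXj : Measurable[F (j+1)] (X j) :=
        (ih hj').mono (hFmono (Nat.le_succ j)) le_rfl
      have hq : Measurable[F (j+1)] (q (j+1)) := by
        have h1 : Measurable[MeasurableSpace.comap (q (j+1)) Real.measurableSpace] (q (j+1)) :=
          Measurable.of_comap_le le_rfl
        exact h1.mono (le_iSup₂ (f := fun i (_ : i ∈ Finset.Icc 1 (j+1)) =>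
          MeasurableSpace.comap (q i) Real.measurableSpace) (j+1)
          (Finset.mem_Icc.mpr ⟨by omega, le_rfl⟩)) le_rfl
      have heq : X (j+1) = fun ω => X j ω + (b - min (X j ω) C) * T / n
          + σ * q (j+1) ω * Real.sqrt (min (X j ω) C) := by
        funext ω
        have := hXrec (j+1) (by omega) hj ω
        simpa using this
      rw [heq]
      have hmin : Measurable[F (j+1)] (fun ω => min (X j ω) C) := hXj.min measurable_const
      exact ((hXj.add (((measurable_const.sub hmin).mul measurable_const).div
        measurable_const)).add ((measurable_const.mul hq).mul
        (Real.continuous_sqrt.measurable.comp hmin)))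
  have hXmeas : ∀ j, j ≤ n → Measurable (X j) :=
    fun j hj => (hXsm j hj).mono (hF_le j) le_rfl
  -- a.e. the q's take the two values ±a
  have hAk : ∀ k, 1 ≤ k → k ≤ n → ∀ᵐ ω ∂μ, q k ω = a ∨ q k ω = -a := by
    intro k hk1 hkn
    obtain ⟨h1, h2⟩ := hdist k hk1 hkn
    have hS : MeasurableSet {ω | q k ω = a} := (hmeas k) (measurableSet_singleton a)
    have hS' : MeasurableSet {ω | q k ω = -a} := (hmeas k) (measurableSet_singleton (-a))
    have hdisj : Disjoint {ω | q k ω = a} {ω | q k ω = -a} := by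
      rw [Set.disjoint_left]
      intro ω hω hω'
      simp only [Set.mem_setOf_eq] at hω hω'
      rw [hω] at hω'; linarith
    have hunion : μ ({ω | q k ω = a} ∪ {ω | q k ω = -a}) = 1 := by
      rw [measure_union hdisj hS', h1, h2]
      rw [one_div]; exact ENNReal.inv_two_add_inv_two
    have hcompl : μ ({ω | q k ω = a} ∪ {ω | q k ω = -a})ᶜ = 0 := by
      rw [prob_compl_eq_zero_iff (hS.union hS')]
      exact hunion
    filter_upwards [MeasureTheory.measure_eq_zero_iff_ae_notMem.mp hcompl] with ω hω
    simpa [Set.mem_union, Set.mem_setOf_eq, not_or] using not_not.mp (by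
      intro h; exact hω h)
  have hA : ∀ᵐ ω ∂μ, ∀ k, 1 ≤ k → k ≤ n → (q k ω = a ∨ q k ω = -a) := by
    rw [ae_all_iff]
    intro k
    by_cases hk : 1 ≤ k ∧ k ≤ n
    · filter_upwards [hAk k hk.1 hk.2] with ω h _ _; exact h
    · filter_upwards with ω h1 h2; exact absurd ⟨h1, h2⟩ hk
  -- nonnegativity of the scheme on the good event
  have hTn2 : T / n < 1/2 := by
    rw [div_lt_iff₀ hn0]; linarith
  have key_nonneg : ∀ ω, (∀ k, 1 ≤ k → k ≤ n → (q k ω = a ∨ q k ω = -a)) →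
      ∀ k, k ≤ n → 0 ≤ X k ω := by
    intro ω hω k
    induction k with
    | zero => intro _; rw [hX0]; exact hx₀.le
    | succ k ih =>
      intro hk
      have hXk : 0 ≤ X k ω := ih (by omega)
      have hq : q (k+1) ω = a ∨ q (k+1) ω = -a := hω (k+1) (by omega) hk
      have hqge : -a ≤ q (k+1) ω := by
        rcases hq with h | h <;> rw [h] <;> linarith
      have hrec := hXrec (k+1) (by omega) hk ω
      simp only [Nat.add_sub_cancel] at hrec
      rw [hrec]
      set m := min (X k ω) C with hm
      have hm0 : 0 ≤ m := le_min hXk hC.le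
      have hmX : m ≤ X k ω := min_le_left _ _
      have hs2 : Real.sqrt m ^ 2 = m := Real.sq_sqrt hm0
      have haux := cir_aux_nonneg b σ (T/n) a (Real.sqrt m) (q (k+1) ω) (X k ω)
        hσ.le hσ2 hb.le hTn hTn2 ha2 ha.le (Real.sqrt_nonneg m) hqge
        (by rw [hs2]; exact hmX)
      rw [hs2] at haux
      rw [mul_div_assoc]
      exact haux
  -- pointwise increment bound on the good event
  set D : ℝ := (b + C) * T / n + σ * a * Real.sqrt C with hD_def
  have hD0 : 0 ≤ D := by positivity
  have key_bound : ∀ ω, (∀ k, 1 ≤ k → k ≤ n → (q k ω = a ∨ q k ω = -a)) →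
      ∀ k, 1 ≤ k → k ≤ n → |X k ω - X (k-1) ω| ≤ D := by
    intro ω hω k hk1 hkn
    have hX1 : 0 ≤ X (k-1) ω := key_nonneg ω hω (k-1) (by omega)
    set m := min (X (k-1) ω) C with hm
    have hm0 : 0 ≤ m := le_min hX1 hC.le
    have hmC : m ≤ C := min_le_right _ _
    have habs : |q k ω| = a := by
      rcases hω k hk1 hkn with h | h <;> rw [h] <;>
        simp [abs_of_pos ha, abs_of_neg (neg_neg_iff_pos.mpr ha)]
    have hrec := hXrec k hk1 hkn ω
    have hQ : X k ω - X (k-1) ω = (b - m) * T / n + σ * q k ω * Real.sqrt m := by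
      rw [hrec]; ring
    rw [hQ]
    have h1 : |(b - m) * T / n| ≤ (b + C) * T / n := by
      rw [abs_div, abs_mul, abs_of_pos hn0, abs_of_pos hT]
      have : |b - m| ≤ b + C := abs_le.mpr ⟨by linarith, by linarith⟩
      gcongr
    have h2 : |σ * q k ω * Real.sqrt m| ≤ σ * a * Real.sqrt C := by
      rw [abs_mul, abs_mul, abs_of_pos hσ, habs,
        abs_of_nonneg (Real.sqrt_nonneg m)]
      exact mul_le_mul_of_nonneg_left (Real.sqrt_le_sqrt hmC)
        (by positivity)
    calc |(b - m) * T / n + σ * q k ω * Real.sqrt m|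
        ≤ |(b - m) * T / n| + |σ * q k ω * Real.sqrt m| := abs_add_le _ _
      _ ≤ D := by rw [hD_def]; linarith
  -- arithmetic: n * D^2 is bounded by the announced constant
  have hrn : Real.sqrt n ^ 2 = (n:ℝ) := Real.sq_sqrt hn0.le
  have hrn1 : (1:ℝ) ≤ Real.sqrt n := by
    rw [show (1:ℝ) = Real.sqrt 1 by simp]
    exact Real.sqrt_le_sqrt hn1
  have hna' : Real.sqrt n * a = Real.sqrt T := by
    rw [ha_def, ← Real.sqrt_mul hn0.le]
    congr 1
    field_simp
  have hTC : Real.sqrt T * Real.sqrt C = Real.sqrt (T*C) := (Real.sqrt_mul hT.le C).symm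
  have hD2 : (n:ℝ) * D^2 ≤ ((b + C) * T + σ * Real.sqrt (T * C))^2 := by
    have h1 : Real.sqrt n * D = Real.sqrt n * ((b+C)*T/n) + σ * Real.sqrt (T*C) := by
      rw [hD_def, mul_add]
      congr 1
      rw [← hTC, ← hna']
      ring
    have h2 : Real.sqrt n * ((b+C)*T/n) ≤ (b+C)*T := by
      have hsn : Real.sqrt n ≤ (n:ℝ) := by
        have h := Real.sqrt_le_sqrt (show (n:ℝ) ≤ (n:ℝ)^2 by nlinarith)
        rwa [Real.sqrt_sq hn0.le] at h
      have hdiv : Real.sqrt n / n ≤ 1 := (div_le_one hn0).mpr hsn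
      calc Real.sqrt n * ((b+C)*T/n) = (b+C)*T * (Real.sqrt n / n) := by ring
        _ ≤ (b+C)*T * 1 := mul_le_mul_of_nonneg_left hdiv (by positivity)
        _ = (b+C)*T := mul_one _
    have h3 : Real.sqrt n * D ≤ (b + C) * T + σ * Real.sqrt (T * C) := by
      rw [h1]; have : 0 ≤ σ * Real.sqrt (T*C) := by positivity
      linarith
    have h4 : (Real.sqrt n * D)^2 ≤ ((b + C) * T + σ * Real.sqrt (T * C))^2 := by
      apply pow_le_pow_left₀ (by positivity) h3
    rw [mul_pow, hrn] at h4
    exact h4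
  -- second moment termwise bound
  have hbound2 : ∀ k, 1 ≤ k → k ≤ n → ∀ᵐ ω ∂μ,
      (μ[fun ω' => (X k ω' - X (k-1) ω')^2 | F (k-1)]) ω ≤ D^2 := by
    intro k hk1 hkn
    have hQb : ∀ᵐ ω ∂μ, |(fun ω' => (X k ω' - X (k-1) ω')^2) ω| ≤ ((D^2).toNNReal : ℝ) := by
      filter_upwards [hA] with ω hω
      have h := key_bound ω hω k hk1 hkn
      show |(X k ω - X (k-1) ω)^2| ≤ _
      rw [abs_of_nonneg (sq_nonneg _), Real.coe_toNNReal _ (by positivity)]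
      calc (X k ω - X (k-1) ω)^2 = |X k ω - X (k-1) ω|^2 := (sq_abs _).symm
        _ ≤ D^2 := pow_le_pow_left₀ (abs_nonneg _) h 2
    have hcd := ae_bdd_condExp_of_ae_bdd (m := F (k-1)) hQb
    filter_upwards [hcd] with ω hω
    rw [Real.coe_toNNReal _ (by positivity)] at hω
    exact (le_abs_self _).trans hω
  -- first moment: identification of the conditional expectation with the drift
  have hbound1 : ∀ k, 1 ≤ k → k ≤ n → ∀ᵐ ω ∂μ,
      |(μ[fun ω' => X k ω' - X (k-1) ω' | F (k-1)]) ω| ≤ (b+C)*T/n := by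
    intro k hk1 hkn
    have hkn' : k - 1 < n := by omega
    -- the drift and diffusion coefficient
    set f : Ω → ℝ := fun ω => (b - min (X (k-1) ω) C) * T / n with hf_def
    set G : Ω → ℝ := fun ω => σ * Real.sqrt (min (X (k-1) ω) C) with hG_def
    have hmin_sm : Measurable[F (k-1)] (fun ω => min (X (k-1) ω) C) :=
      (hXsm (k-1) (by omega)).min measurable_const
    have hf_sm : Measurable[F (k-1)] f :=
      ((measurable_const.sub hmin_sm).mul measurable_const).div measurable_const
    have hG_sm : Measurable[F (k-1)] G :=
      measurable_const.mul (Real.continuous_sqrt.measurable.comp hmin_sm)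
    have hf_meas : Measurable f := hf_sm.mono (hF_le (k-1)) le_rfl
    have hG_meas : Measurable G := hG_sm.mono (hF_le (k-1)) le_rfl
    have hfb : ∀ᵐ ω ∂μ, |f ω| ≤ (b+C)*T/n := by
      filter_upwards [hA] with ω hω
      have hX1 : 0 ≤ X (k-1) ω := key_nonneg ω hω (k-1) (by omega)
      have hm0 : 0 ≤ min (X (k-1) ω) C := le_min hX1 hC.le
      have hmC : min (X (k-1) ω) C ≤ C := min_le_right _ _
      rw [hf_def]
      simp only
      rw [abs_div, abs_mul, abs_of_pos hT, abs_of_pos hn0]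
      have habs : |b - min (X (k-1) ω) C| ≤ b + C := abs_le.mpr ⟨by linarith, by linarith⟩
      gcongr
    have hf_int : Integrable f μ :=
      Integrable.mono' (integrable_const ((b+C)*T/n)) hf_meas.aestronglyMeasurable
        (by filter_upwards [hfb] with ω h; rwa [Real.norm_eq_abs])
    have hGq_int : Integrable (G * q k) μ := by
      apply Integrable.mono' (integrable_const (σ * Real.sqrt C * a))
        (hG_meas.mul (hmeas k)).aestronglyMeasurable
      filter_upwards [hAk k hk1 hkn] with ω hω
      have habsq : |q k ω| = a := by
        rcases hω with h | h <;> rw [h] <;>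
          simp [abs_of_pos ha, abs_of_neg (neg_neg_iff_pos.mpr ha)]
      show ‖σ * Real.sqrt (min (X (k-1) ω) C) * q k ω‖ ≤ σ * Real.sqrt C * a
      rw [Real.norm_eq_abs, abs_mul, habsq, abs_mul, abs_of_pos hσ,
        abs_of_nonneg (Real.sqrt_nonneg _)]
      have hle : Real.sqrt (min (X (k-1) ω) C) ≤ Real.sqrt C :=
        Real.sqrt_le_sqrt (min_le_right _ _)
      apply mul_le_mul_of_nonneg_right _ ha.le
      exact mul_le_mul_of_nonneg_left hle hσ.le
    have hq_int : Integrable (q k) μ := by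
      apply Integrable.mono' (integrable_const a) (hmeas k).aestronglyMeasurable
      filter_upwards [hAk k hk1 hkn] with ω hω
      rw [Real.norm_eq_abs]
      rcases hω with h | h <;> rw [h] <;>
        simp [abs_of_pos ha, abs_of_neg (neg_neg_iff_pos.mpr ha)]
    -- independence of q k from F (k-1)
    have hindep' : Indep (MeasurableSpace.comap (q k) Real.measurableSpace) (F (k-1)) μ := by
      set i₀ : Fin n := ⟨k-1, hkn'⟩ with hi₀
      have hdisj : Disjoint ({i₀} : Set (Fin n)) {i : Fin n | (i:ℕ)+1 < k} := by
        rw [Set.disjoint_left]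
        intro i hi hi'
        rw [Set.mem_singleton_iff] at hi
        rw [Set.mem_setOf_eq, hi, hi₀] at hi'
        simp at hi'
        omega
      have h := indep_iSup_of_disjoint
        (m := fun i : Fin n => MeasurableSpace.comap (q ((i:ℕ)+1)) Real.measurableSpace)
        (fun i => (hmeas _).comap_le) hindep hdisj
      apply indep_of_indep_of_le_left (indep_of_indep_of_le_right h ?le2) ?le1
      case le1 =>
        have hk' : (i₀:ℕ) + 1 = k := by simp [hi₀]; omega
        have : MeasurableSpace.comap (q k) Real.measurableSpace
            = MeasurableSpace.comap (q ((i₀:ℕ)+1)) Real.measurableSpace := by rw [hk']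
        rw [this]
        exact le_iSup₂ (f := fun (i : Fin n) (_ : i ∈ ({i₀} : Set (Fin n))) =>
          MeasurableSpace.comap (q ((i:ℕ)+1)) Real.measurableSpace) i₀ rfl
      case le2 =>
        apply iSup₂_le
        intro i hi
        obtain ⟨hi1, hi2⟩ := Finset.mem_Icc.mp hi
        have hin : i - 1 < n := by omega
        set j : Fin n := ⟨i-1, hin⟩ with hj
        have hji : (j:ℕ)+1 = i := by simp [hj]; omega
        have hmem : j ∈ {i : Fin n | (i:ℕ)+1 < k} := by
          rw [Set.mem_setOf_eq, hji]; omega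
        have : MeasurableSpace.comap (q i) Real.measurableSpace
            = MeasurableSpace.comap (q ((j:ℕ)+1)) Real.measurableSpace := by rw [hji]
        rw [this]
        exact le_iSup₂ (f := fun (i : Fin n) (_ : i ∈ {i : Fin n | (i:ℕ)+1 < k}) =>
          MeasurableSpace.comap (q ((i:ℕ)+1)) Real.measurableSpace) j hmem
    -- the integral of q k vanishes
    have hint0 : ∫ ω, q k ω ∂μ = 0 := by
      obtain ⟨h1, h2⟩ := hdist k hk1 hkn
      have hS : MeasurableSet {ω | q k ω = a} := (hmeas k) (measurableSet_singleton a)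
      have hS' : MeasurableSet {ω | q k ω = -a} := (hmeas k) (measurableSet_singleton (-a))
      have hae : q k =ᵐ[μ] fun ω => Set.indicator {ω | q k ω = a} (fun _ => a) ω
          + Set.indicator {ω | q k ω = -a} (fun _ => -a) ω := by
        filter_upwards [hAk k hk1 hkn] with ω hω
        rcases hω with h | h
        · have hmem : ω ∈ {ω | q k ω = a} := h
          have hnmem : ω ∉ {ω | q k ω = -a} := by
            rw [Set.mem_setOf_eq, h]
            intro hc; linarith
          rw [Set.indicator_of_mem hmem, Set.indicator_of_notMem hnmem, h, add_zero]
        · have hmem : ω ∈ {ω | q k ω = -a} := h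
          have hnmem : ω ∉ {ω | q k ω = a} := by
            rw [Set.mem_setOf_eq, h]
            intro hc; linarith
          rw [Set.indicator_of_mem hmem, Set.indicator_of_notMem hnmem, h, zero_add]
      rw [integral_congr_ae hae, integral_add ((integrable_const a).indicator hS)
        ((integrable_const (-a)).indicator hS'), integral_indicator_const _ hS,
        integral_indicator_const _ hS', measureReal_def, measureReal_def, h1, h2]
      rw [ENNReal.toReal_div, ENNReal.toReal_one, ENNReal.toReal_ofNat]
      simp only [smul_eq_mul]
      ring
    -- conditional expectation of q k vanishes
    have hq_sm : StronglyMeasurable[MeasurableSpace.comap (q k) Real.measurableSpace] (q k) :=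
      (Measurable.of_comap_le le_rfl).stronglyMeasurable
    have hq0 : μ[q k | F (k-1)] =ᵐ[μ] fun _ => (0:ℝ) := by
      have h := condExp_indep_eq (hmeas k).comap_le (hF_le (k-1)) hq_sm hindep'
      rw [hint0] at h
      exact h
    -- identification of the conditional expectation with the drift
    have hsplit : (fun ω' => X k ω' - X (k-1) ω') = f + G * q k := by
      funext ω
      rw [Pi.add_apply, Pi.mul_apply, hf_def, hG_def]
      simp only
      rw [hXrec k hk1 hkn ω]
      ring
    have hcond1 : μ[fun ω' => X k ω' - X (k-1) ω' | F (k-1)] =ᵐ[μ] f := by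
      calc μ[fun ω' => X k ω' - X (k-1) ω' | F (k-1)]
          = μ[f + G * q k | F (k-1)] := by rw [hsplit]
        _ =ᵐ[μ] μ[f | F (k-1)] + μ[G * q k | F (k-1)] := condExp_add hf_int hGq_int _
        _ =ᵐ[μ] f + G * μ[q k | F (k-1)] := by
            rw [condExp_of_stronglyMeasurable (hF_le (k-1)) hf_sm.stronglyMeasurable hf_int]
            exact Filter.EventuallyEq.add (Filter.EventuallyEq.refl _ _)
              (condExp_mul_of_stronglyMeasurable_left hG_sm.stronglyMeasurable hGq_int hq_int)
        _ =ᵐ[μ] f := by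
            filter_upwards [hq0] with ω h
            rw [Pi.add_apply, Pi.mul_apply, h, mul_zero, add_zero]
    filter_upwards [hcond1, hfb] with ω h1 h2
    rw [h1]
    exact h2
  -- conclude
  constructor
  · have hall : ∀ᵐ ω ∂μ, ∀ k, 1 ≤ k → k ≤ n →
        (μ[fun ω' => (X k ω' - X (k-1) ω')^2 | F (k-1)]) ω ≤ D^2 := by
      rw [ae_all_iff]
      intro k
      by_cases hk : 1 ≤ k ∧ k ≤ n
      · filter_upwards [hbound2 k hk.1 hk.2] with ω h _ _; exact h
      · filter_upwards with ω h1 h2; exact absurd ⟨h1, h2⟩ hk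
    filter_upwards [hall] with ω hω
    calc ∑ k ∈ Finset.Icc 1 n,
          (μ[fun ω' => (X k ω' - X (k-1) ω')^2 | F (k-1)]) ω
        ≤ ∑ _k ∈ Finset.Icc 1 n, D^2 := Finset.sum_le_sum (fun k hk =>
            hω k (Finset.mem_Icc.mp hk).1 (Finset.mem_Icc.mp hk).2)
      _ = (n:ℝ) * D^2 := by
          rw [Finset.sum_const, Nat.card_Icc, nsmul_eq_mul]
          norm_num
      _ ≤ ((b + C) * T + σ * Real.sqrt (T * C))^2 := hD2
  · have hall : ∀ᵐ ω ∂μ, ∀ k, 1 ≤ k → k ≤ n →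
        |(μ[fun ω' => X k ω' - X (k-1) ω' | F (k-1)]) ω| ≤ (b+C)*T/n := by
      rw [ae_all_iff]
      intro k
      by_cases hk : 1 ≤ k ∧ k ≤ n
      · filter_upwards [hbound1 k hk.1 hk.2] with ω h _ _; exact h
      · filter_upwards with ω h1 h2; exact absurd ⟨h1, h2⟩ hk
    filter_upwards [hall] with ω hω
    calc ∑ k ∈ Finset.Icc 1 n,
          |(μ[fun ω' => X k ω' - X (k-1) ω' | F (k-1)]) ω|
        ≤ ∑ _k ∈ Finset.Icc 1 n, (b+C)*T/n := Finset.sum_le_sum (fun k hk =>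
            hω k (Finset.mem_Icc.mp hk).1 (Finset.mem_Icc.mp hk).2)
      _ = (n:ℝ) * ((b+C)*T/n) := by
          rw [Finset.sum_const, Nat.card_Icc, nsmul_eq_mul]
          norm_num
      _ = (b+C)*T := by field_simp
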